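/- arXiv:1408.1074 — 8 statements merged into one kernel-verified Lean document; each statement's English description precedes it below -/
import Mathlib

section
/- Let H : (0,1) → ℝ be defined by H(y) = (1+y²)/(2y(1−y²)), and let y₀ = √(√5 − 2). Then for every y ∈ (0,1) one has H(y) ≥ H(y₀), with equality if and only if y = y₀; moreover H(y₀) = 1/√(10√5 − 22). -/
/-- The function `H y = (1+y²)/(2y(1−y²))` on `(0,1)` attains its
minimum exactly at `y₀ = √(√5 − 2)`, and the minimum value is `1/√(10√5 − 22)`. -/
theorem stmt_0 (H : ℝ → ℝ) (hH : ∀ y, H y = (1 + y ^ 2) / (2 * y * (1 - y ^ 2)))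
    (y₀ : ℝ) (hy₀ : y₀ = Real.sqrt (Real.sqrt 5 - 2)) :
    (∀ y ∈ Set.Ioo (0 : ℝ) 1, H y₀ ≤ H y ∧ (H y = H y₀ ↔ y = y₀)) ∧
      H y₀ = 1 / Real.sqrt (10 * Real.sqrt 5 - 22) := by
  set s := Real.sqrt 5 with hs_def
  have hs5 : s ^ 2 = 5 := Real.sq_sqrt (by norm_num)
  have hs_pos : 0 < s := Real.sqrt_pos.2 (by norm_num)
  have hs_gt : (2.2 : ℝ) < s := by nlinarith
  have hs_lt : s < 2.3 := by nlinarith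
  have hy2 : y₀ ^ 2 = s - 2 := by
    rw [hy₀]; exact Real.sq_sqrt (by nlinarith)
  have hy0_pos : 0 < y₀ := by
    rw [hy₀]; exact Real.sqrt_pos.2 (by nlinarith)
  have hy0_lt : y₀ < 1 := by nlinarith
  have hden0 : 0 < 2 * y₀ * (1 - y₀ ^ 2) := by nlinarith
  have key : ∀ y : ℝ,
      (1 + y ^ 2) * (2 * y₀ * (1 - y₀ ^ 2)) - (1 + y₀ ^ 2) * (2 * y * (1 - y ^ 2))
        = 2 * (y - y₀) ^ 2 * ((s - 1) * y + (s + 1) * y₀) := by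
    intro y
    linear_combination (-4 * y₀ - 2 * y ^ 2 * y₀ + 4 * y + 2 * y ^ 3 + 2 * y * s
        - 2 * y₀ * s) * hy2 + (2 * y - 2 * y₀) * hs5
  constructor
  · rintro y ⟨hy_pos, hy_lt⟩
    have hdeny : 0 < 2 * y * (1 - y ^ 2) := by nlinarith
    have hfac : 0 < (s - 1) * y + (s + 1) * y₀ := by nlinarith
    constructor
    · rw [hH, hH, div_le_div_iff₀ hden0 hdeny]
      nlinarith [key y, sq_nonneg (y - y₀), mul_nonneg (sq_nonneg (y - y₀)) hfac.le]
    · constructor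
      · intro h
        rw [hH, hH, div_eq_div_iff hdeny.ne' hden0.ne'] at h
        have h0 : 2 * (y - y₀) ^ 2 * ((s - 1) * y + (s + 1) * y₀) = 0 := by
          rw [← key y]; linarith
        have hsq : (y - y₀) ^ 2 = 0 := by
          rcases mul_eq_zero.1 h0 with h1 | h1
          · rcases mul_eq_zero.1 h1 with h2 | h2
            · norm_num at h2
            · exact h2
          · exact absurd h1 hfac.ne'
        have := pow_eq_zero_iff (n := 2) (by norm_num) |>.1 hsq
        linarith
      · intro h; rw [h]
  · have h10 : (0 : ℝ) < 10 * s - 22 := by nlinarith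
    have hw_pos : 0 < Real.sqrt (10 * s - 22) := Real.sqrt_pos.2 h10
    have hw2 : Real.sqrt (10 * s - 22) ^ 2 = 10 * s - 22 := Real.sq_sqrt h10.le
    rw [hH, div_eq_div_iff hden0.ne' (by positivity : Real.sqrt (10 * s - 22) ≠ 0)]
    set w := Real.sqrt (10 * s - 22) with hw_def
    have hprod : ((1 + y₀ ^ 2) * w - 1 * (2 * y₀ * (1 - y₀ ^ 2)))
        * ((1 + y₀ ^ 2) * w + 1 * (2 * y₀ * (1 - y₀ ^ 2))) = 0 := by
      have : ((1 + y₀ ^ 2) * w) ^ 2 = (1 * (2 * y₀ * (1 - y₀ ^ 2))) ^ 2 := by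
        have e1 : ((1 + y₀ ^ 2) * w) ^ 2 = (s - 1) ^ 2 * (10 * s - 22) := by
          rw [mul_pow, hw2, hy2]; ring_nf
        have e2 : (1 * (2 * y₀ * (1 - y₀ ^ 2))) ^ 2 = 4 * (s - 2) * (3 - s) ^ 2 := by
          linear_combination (36 - 16 * y₀ ^ 2 + 4 * y₀ ^ 4 - 24 * s + 4 * y₀ ^ 2 * s
            + 4 * s ^ 2) * hy2
        rw [e1, e2]; linear_combination (6 * s - 10) * hs5
      linear_combination this
    have hpos2 : 0 < (1 + y₀ ^ 2) * w + 1 * (2 * y₀ * (1 - y₀ ^ 2)) := by nlinarith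
    have := mul_eq_zero.1 hprod
    rcases this with h | h
    · linarith
    · exact absurd h hpos2.ne'
end

section
/- For every w ∈ Ω and z ∈ Ω, the function f_w(z) = (exp(ℓ(z)) − exp(ℓ(w)))/(exp(ℓ(z)) − exp(conj(ℓ(w)))) satisfies |f_w(z)| < 1 if z ≠ w, and f_w(w) = 0. -/
open Complex

/-- The open upper half of the unit disk. -/
def upperHalfDisk : Set ℂ := {z : ℂ | 0 < z.im ∧ ‖z‖ < 1}

/-- `ℓ(z) = Log((1+z)²/(1−z)²)` with the principal branch of the logarithm. -/
noncomputable def ell (z : ℂ) : ℂ := Complex.log ((1 + z) ^ 2 / (1 - z) ^ 2)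

/-- The map `f_w(z) = (exp(ℓ(z)) − exp(ℓ(w)))/(exp(ℓ(z)) − exp(conj(ℓ(w))))`. -/
noncomputable def fMap (w z : ℂ) : ℂ :=
  (Complex.exp (ell z) - Complex.exp (ell w)) /
    (Complex.exp (ell z) - Complex.exp ((starRingEnd ℂ) (ell w)))

lemma im_exp_ell {z : ℂ} (hz : z ∈ upperHalfDisk) : 0 < (Complex.exp (ell z)).im := by
  obtain ⟨h1, h2⟩ := hz
  have hz1 : (1 : ℂ) - z ≠ 0 := by
    intro h
    have hz' : z = 1 := by linear_combination -h
    simp [hz'] at h1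
  have hz2 : (1 : ℂ) + z ≠ 0 := by
    intro h
    have hz' : z = -1 := by linear_combination h
    simp [hz'] at h1
  have hzn : Complex.normSq z < 1 := by
    have := Complex.sq_norm z
    nlinarith [norm_nonneg z]
  have hns : 0 < Complex.normSq (1 - z) := Complex.normSq_pos.mpr hz1
  have hre : 0 < ((1+z)/(1-z)).re := by
    rw [Complex.div_re, ← add_div]
    apply div_pos _ hns
    simp only [Complex.add_re, Complex.add_im, Complex.sub_re, Complex.sub_im,
      Complex.one_re, Complex.one_im, Complex.normSq_apply] at *
    nlinarith
  have him : 0 < ((1+z)/(1-z)).im := by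
    rw [Complex.div_im, div_sub_div_same]
    apply div_pos _ hns
    simp only [Complex.add_re, Complex.add_im, Complex.sub_re, Complex.sub_im,
      Complex.one_re, Complex.one_im]
    nlinarith
  have hexp : Complex.exp (ell z) = ((1+z)/(1-z))^2 := by
    rw [ell, Complex.exp_log (div_ne_zero (pow_ne_zero _ hz2) (pow_ne_zero _ hz1)), div_pow]
  rw [hexp, sq, Complex.mul_im]
  nlinarith

lemma abs_key {u v : ℂ} (hu : 0 < u.im) (hv : 0 < v.im) :
    ‖u - v‖ < ‖u - (starRingEnd ℂ) v‖ := by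
  have h : Complex.normSq (u - v) < Complex.normSq (u - (starRingEnd ℂ) v) := by
    simp only [Complex.normSq_apply, Complex.sub_re, Complex.sub_im,
      Complex.conj_re, Complex.conj_im]
    nlinarith
  have := norm_nonneg (u - v)
  have := norm_nonneg (u - (starRingEnd ℂ) v)
  nlinarith [Complex.sq_norm (u - v), Complex.sq_norm (u - (starRingEnd ℂ) v)]

/-- for `w, z ∈ Ω`, `|f_w(z)| < 1` when `z ≠ w`, and `f_w(w) = 0`. -/
theorem stmt_2 :
    ∀ w ∈ upperHalfDisk, ∀ z ∈ upperHalfDisk,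
      (z ≠ w → ‖fMap w z‖ < 1) ∧ fMap w w = 0 := by
  intro w hw z hz
  have hw' := im_exp_ell hw
  have hz' := im_exp_ell hz
  set u := Complex.exp (ell z)
  set v := Complex.exp (ell w)
  have hc : Complex.exp ((starRingEnd ℂ) (ell w)) = (starRingEnd ℂ) v := by
    rw [← Complex.exp_conj]
  constructor
  · intro _
    rw [fMap, hc, norm_div, div_lt_one]
    · exact abs_key hz' hw'
    · have := abs_key hz' hw'
      have := norm_nonneg (u - v)
      linarith
  · rw [fMap, hc, sub_self, zero_div]
end

section
/- For every w ∈ Ω, as z → w with z ∈ Ω \ {w}, the quantity |f_w(z)/(z − w)| tends to h(w) = |exp(ℓ(w)) · ℓ′(w) / (exp(ℓ(w)) − exp(conj(ℓ(w))))|, where ℓ′(w) = 4/(1 − w²). -/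
open Complex Filter

/-- `h(w) = |exp(ℓ(w))·ℓ′(w)/(exp(ℓ(w)) − exp(conj(ℓ(w))))|` where `ℓ′(w) = 4/(1 − w²)`. -/
noncomputable def hFun (w : ℂ) : ℝ :=
  ‖(Complex.exp (ell w) * (4 / (1 - w ^ 2)) /
    (Complex.exp (ell w) - Complex.exp ((starRingEnd ℂ) (ell w))))‖

/-- for `w ∈ Ω`, `|f_w(z)/(z − w)| → h(w)` as `z → w` within `Ω \ {w}`. -/
theorem stmt_3 :
    ∀ w ∈ upperHalfDisk,
      Tendsto (fun z : ℂ => ‖(fMap w z / (z - w))‖)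
        (nhdsWithin w (upperHalfDisk \ {w})) (nhds (hFun w)) := by
  intro w hw
  obtain ⟨him, habs⟩ := hw
  set G : ℂ → ℂ := fun z => (1 + z) ^ 2 / (1 - z) ^ 2 with hGdef
  have hw1 : w ≠ 1 := by rintro rfl; simp at habs
  have hwm1 : w ≠ -1 := by rintro rfl; simp at habs
  have h1w : (1 : ℂ) - w ≠ 0 := sub_ne_zero.mpr (Ne.symm hw1)
  have h1w' : (1 : ℂ) + w ≠ 0 := by
    intro h; apply hwm1; linear_combination h
  have hGne : G w ≠ 0 := div_ne_zero (pow_ne_zero _ h1w') (pow_ne_zero _ h1w)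
  have hexpG : Complex.exp (ell w) = G w := Complex.exp_log hGne
  -- normSq w < 1
  have hnsq : Complex.normSq w < 1 := by
    have := Complex.sq_norm w
    nlinarith [norm_nonneg w]
  -- positivity of Im (G w)
  have hnsq1w : 0 < Complex.normSq (1 - w) := Complex.normSq_pos.mpr h1w
  set u : ℂ := (1 + w) / (1 - w) with hu
  have hure : 0 < u.re := by
    rw [hu, Complex.div_re]
    have hnum : (1 + w).re * (1 - w).re + (1 + w).im * (1 - w).im = 1 - Complex.normSq w := by
      simp [Complex.normSq_apply]; ring
    rw [← add_div, hnum]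
    exact div_pos (by linarith) hnsq1w
  have huim : 0 < u.im := by
    rw [hu, Complex.div_im]
    have hnum : (1 + w).im * (1 - w).re - (1 + w).re * (1 - w).im = 2 * w.im := by
      simp; ring
    rw [div_sub_div_same, hnum]
    exact div_pos (by linarith) hnsq1w
  have hGim : 0 < (G w).im := by
    have : G w = u ^ 2 := by rw [hu, div_pow]
    rw [this, sq, Complex.mul_im]
    positivity
  -- denominator nonzero
  have hc : Complex.exp ((starRingEnd ℂ) (ell w)) = (starRingEnd ℂ) (G w) := by
    rw [Complex.exp_conj, hexpG]
  have hdenne : Complex.exp (ell w) - Complex.exp ((starRingEnd ℂ) (ell w)) ≠ 0 := by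
    rw [hexpG, hc, sub_ne_zero]
    intro h
    have : (G w).im = 0 := Complex.conj_eq_iff_im.mp h.symm
    linarith
  -- derivative of G at w
  have hd1 : HasDerivAt (fun z : ℂ => (1 + z) ^ 2) (2 * (1 + w)) w := by
    have := ((hasDerivAt_id w).const_add 1).fun_pow 2
    simpa using this
  have hd2 : HasDerivAt (fun z : ℂ => (1 - z) ^ 2) (-(2 * (1 - w))) w := by
    have := ((hasDerivAt_id w).const_sub 1).fun_pow 2
    simpa using this
  set D : ℂ := G w * (4 / (1 - w ^ 2)) with hD
  have hGderiv : HasDerivAt G D w := by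
    have h := hd1.fun_div hd2 (pow_ne_zero _ h1w)
    refine h.congr_deriv (Eq.symm ?_)
    rw [hD, hGdef]
    have h2 : (1 : ℂ) - w ^ 2 ≠ 0 := by
      intro h; apply h1w'
      have : (1 - w) * (1 + w) = 0 := by linear_combination h
      rcases mul_eq_zero.mp this with h' | h'
      · exact absurd h' h1w
      · exact h'
    field_simp
    ring
  -- the two tendsto pieces
  have hsub : upperHalfDisk \ {w} ⊆ {w}ᶜ := fun z hz => hz.2
  have hle : nhdsWithin w (upperHalfDisk \ {w}) ≤ nhdsWithin w {w}ᶜ := nhdsWithin_mono _ hsub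
  have T1 : Tendsto (slope G w) (nhdsWithin w (upperHalfDisk \ {w})) (nhds D) :=
    (hasDerivAt_iff_tendsto_slope.mp hGderiv).mono_left hle
  have T2 : Tendsto (fun z => (G z - Complex.exp ((starRingEnd ℂ) (ell w)))⁻¹)
      (nhdsWithin w (upperHalfDisk \ {w}))
      (nhds (G w - Complex.exp ((starRingEnd ℂ) (ell w)))⁻¹) := by
    apply Tendsto.inv₀
    · exact ((hGderiv.continuousAt.tendsto.mono_left nhdsWithin_le_nhds).sub tendsto_const_nhds)
    · rw [hexpG] at hdenne; exact hdenne
  have T : Tendsto (fun z => slope G w z * (G z - Complex.exp ((starRingEnd ℂ) (ell w)))⁻¹)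
      (nhdsWithin w (upperHalfDisk \ {w}))
      (nhds (D * (G w - Complex.exp ((starRingEnd ℂ) (ell w)))⁻¹)) := T1.mul T2
  -- eventual equality
  have hev : ∀ᶠ z in nhdsWithin w (upperHalfDisk \ {w}),
      fMap w z / (z - w) = slope G w z * (G z - Complex.exp ((starRingEnd ℂ) (ell w)))⁻¹ := by
    have h1 : ∀ᶠ z in nhdsWithin w (upperHalfDisk \ {w}), z ≠ 1 :=
      (eventually_ne_nhds hw1).filter_mono nhdsWithin_le_nhds
    have h2 : ∀ᶠ z in nhdsWithin w (upperHalfDisk \ {w}), z ≠ -1 :=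
      (eventually_ne_nhds hwm1).filter_mono nhdsWithin_le_nhds
    filter_upwards [h1, h2] with z hz1 hz2
    have hz1' : (1 : ℂ) - z ≠ 0 := sub_ne_zero.mpr (Ne.symm hz1)
    have hz2' : (1 : ℂ) + z ≠ 0 := by intro h; apply hz2; linear_combination h
    have hGz : Complex.exp (ell z) = G z :=
      Complex.exp_log (div_ne_zero (pow_ne_zero _ hz2') (pow_ne_zero _ hz1'))
    rw [fMap, hGz, hexpG, slope_def_field]
    rw [div_div, div_eq_mul_inv, div_eq_mul_inv, mul_inv]
    ring
  have Tfinal := (continuous_norm.tendsto _).comp (T.congr' (hev.mono fun z h => h.symm))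
  convert Tfinal using 2
  · rfl
  rw [hFun, hexpG, hD, div_eq_mul_inv]
end

section
/- For every real y with 0 < y < 1, one has |exp(ℓ(iy)) · ℓ′(iy) / (exp(ℓ(iy)) − exp(conj(ℓ(iy))))| = (1 + y²)/(2y(1 − y²)), where ℓ′(z) = 4/(1 − z²). -/
open Complex

/-- for `0 < y < 1`, with `ℓ′(z) = 4/(1−z²)`,
`|exp(ℓ(iy))·ℓ′(iy)/(exp(ℓ(iy)) − exp(conj(ℓ(iy))))| = (1+y²)/(2y(1−y²))`. -/
theorem stmt_4 (y : ℝ) (hy : y ∈ Set.Ioo (0 : ℝ) 1) :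
    ‖(Complex.exp (ell (y * I)) * (4 / (1 - (y * I) ^ 2)) /
        (Complex.exp (ell (y * I)) - Complex.exp ((starRingEnd ℂ) (ell (y * I)))))‖ =
      (1 + y ^ 2) / (2 * y * (1 - y ^ 2)) := by
  obtain ⟨hy0, hy1⟩ := hy
  have h1 : (1 + (y:ℂ)*I) ≠ 0 := by
    intro h; have := congrArg Complex.re h; simp at this
  have h2 : (1 - (y:ℂ)*I) ≠ 0 := by
    intro h; have := congrArg Complex.re h; simp at this
  have harg : ((1 + (y:ℂ)*I)^2 / (1 - (y:ℂ)*I)^2) ≠ 0 :=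
    div_ne_zero (pow_ne_zero _ h1) (pow_ne_zero _ h2)
  have hw : Complex.exp (ell ((y:ℂ)*I)) = (1 + (y:ℂ)*I)^2/(1-(y:ℂ)*I)^2 := by
    unfold ell; exact Complex.exp_log harg
  have hc : Complex.exp ((starRingEnd ℂ) (ell ((y:ℂ)*I)))
      = (1 - (y:ℂ)*I)^2/(1+(y:ℂ)*I)^2 := by
    rw [Complex.exp_conj, hw]
    simp [map_div₀, map_pow, map_add, map_sub, Complex.conj_ofReal, Complex.conj_I]
    ring_nf
  have hy2 : (1 + (y:ℂ)^2) ≠ 0 := by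
    have : ((1 + y^2 : ℝ) : ℂ) ≠ 0 := Complex.ofReal_ne_zero.mpr (by nlinarith)
    push_cast at this; exact this
  have hyne : (y:ℂ) ≠ 0 := by exact_mod_cast hy0.ne'
  have hy2r : (1 - (y:ℂ)^2) ≠ 0 := by
    have : ((1 - y^2 : ℝ) : ℂ) ≠ 0 := Complex.ofReal_ne_zero.mpr (by nlinarith)
    push_cast at this; exact this
  have hd : Complex.exp (ell ((y:ℂ)*I)) - Complex.exp ((starRingEnd ℂ) (ell ((y:ℂ)*I)))
      = (8*(y:ℂ)*(1-(y:ℂ)^2)*I)/(1+(y:ℂ)^2)^2 := by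
    rw [hw, hc]
    have hzz : (1 + (y:ℂ)*I)*(1 - (y:ℂ)*I) = 1 + (y:ℂ)^2 := by
      have := Complex.I_sq; ring_nf; rw [Complex.I_sq]; ring
    field_simp
    ring_nf
    simp only [show (I:ℂ)^3 = -I from by simp [pow_succ, Complex.I_sq],
      show (I:ℂ)^5 = I from by simp [pow_succ, Complex.I_sq]]
    ring
  have hz2 : (1 - ((y:ℂ)*I)^2) = 1 + (y:ℂ)^2 := by
    rw [mul_pow, Complex.I_sq]; ring
  rw [hd, hw, hz2]
  have habs : ‖(1 - (y:ℂ)*I)‖ = ‖(1 + (y:ℂ)*I)‖ := by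
    rw [show (1 - (y:ℂ)*I) = (starRingEnd ℂ) (1 + (y:ℂ)*I) by
      simp [map_add, Complex.conj_ofReal, Complex.conj_I]; ring, Complex.norm_conj]
  have habs1 : ‖(1 + (y:ℂ)*I)‖ ≠ 0 := by
    simpa using h1
  have e1 : ‖(1+(y:ℂ)^2)‖ = 1+y^2 := by
    rw [show (1+(y:ℂ)^2) = ((1+y^2:ℝ):ℂ) by push_cast; ring, Complex.norm_real, Real.norm_eq_abs]
    exact abs_of_pos (by nlinarith)
  have e2 : ‖(1-(y:ℂ)^2)‖ = 1-y^2 := by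
    rw [show (1-(y:ℂ)^2) = ((1-y^2:ℝ):ℂ) by push_cast; ring, Complex.norm_real, Real.norm_eq_abs]
    exact abs_of_pos (by nlinarith)
  have e3 : ‖((y:ℂ))‖ = y := by rw [Complex.norm_real, Real.norm_eq_abs]; exact abs_of_pos hy0
  have e4 : ‖(4:ℂ)‖ = 4 := by
    rw [show (4:ℂ) = ((4:ℝ):ℂ) by norm_num, Complex.norm_real, Real.norm_eq_abs]; norm_num
  have e8 : ‖(8:ℂ)‖ = 8 := by
    rw [show (8:ℂ) = ((8:ℝ):ℂ) by norm_num, Complex.norm_real, Real.norm_eq_abs]; norm_num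
  simp only [norm_div, norm_mul, norm_pow, Complex.norm_I, habs, e1, e2, e3, e4, e8, mul_one]
  have hypos : (0:ℝ) < 1 - y^2 := by nlinarith
  have hy2pos : (0:ℝ) < 1 + y^2 := by nlinarith
  field_simp
  ring
end

section
/- As z → 0 with z ≠ 0 (z in the punctured open unit disk), z · g(z) tends to 4/(3√3), where g is the exterior mapping function of the upper half-disk defined via m(z) = ((√3/2 + i/2) + 1/z)/((−√3/2 + i/2) + 1/z) and g(z) = (1 + 2·m(z)^{3/2} + m(z)³)/(m(z)³ − 1), using principal branch complex powers. In other words, the outer radius (logarithmic capacity) of the upper half of the unit disk equals 4/(3√3). -/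
open Complex Filter

/-- `m(z) = ((√3/2 + i/2) + 1/z)/((−√3/2 + i/2) + 1/z)`. -/
noncomputable def mMap (z : ℂ) : ℂ :=
  (((Real.sqrt 3 / 2 : ℝ) : ℂ) + I / 2 + 1 / z) /
    (-((Real.sqrt 3 / 2 : ℝ) : ℂ) + I / 2 + 1 / z)

/-- `g(z) = (1 + 2m(z)^{3/2} + m(z)³)/(m(z)³ − 1)` with the principal branch power. -/
noncomputable def gMap (z : ℂ) : ℂ :=
  (1 + 2 * mMap z ^ ((3 : ℂ) / 2) + mMap z ^ (3 : ℕ)) / (mMap z ^ (3 : ℕ) - 1)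

/-- `z·g(z) → 4/(3√3)` as `z → 0` in the punctured open unit disk:
the outer radius (logarithmic capacity) of the upper half-disk is `4/(3√3)`. -/
theorem stmt_5 :
    Tendsto (fun z : ℂ => z * gMap z)
      (nhdsWithin 0 (Metric.ball (0 : ℂ) 1 \ {0}))
      (nhds ((4 / (3 * Real.sqrt 3) : ℝ) : ℂ)) := by
  set l := nhdsWithin (0 : ℂ) (Metric.ball (0 : ℂ) 1 \ {0}) with hl
  set s3 : ℂ := ((Real.sqrt 3 : ℝ) : ℂ) with hs3
  have hs3ne : s3 ≠ 0 := by
    simp only [hs3, Complex.ofReal_ne_zero]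
    positivity
  set a : ℂ := s3 / 2 + I / 2 with ha
  set b : ℂ := -(s3 / 2) + I / 2 with hb
  have hne : ∀ᶠ z in l, z ≠ 0 := by
    filter_upwards [eventually_mem_nhdsWithin] with z hz
    exact hz.2
  -- `mMap z = (a z + 1)/(b z + 1)` for nonzero `z`
  have hm_eq : ∀ z : ℂ, z ≠ 0 → mMap z = (a * z + 1) / (b * z + 1) := by
    intro z hz
    have hzi : (z : ℂ)⁻¹ ≠ 0 := inv_ne_zero hz
    have h1 : ((Real.sqrt 3 / 2 : ℝ) : ℂ) + I / 2 + 1 / z = (a * z + 1) * z⁻¹ := by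
      rw [ha]
      push_cast
      field_simp
      rw [hs3]
      ring
    have h2 : -((Real.sqrt 3 / 2 : ℝ) : ℂ) + I / 2 + 1 / z = (b * z + 1) * z⁻¹ := by
      rw [hb]
      push_cast
      field_simp
      rw [hs3]
      ring
    rw [mMap, h1, h2, mul_div_mul_right _ _ hzi]
  -- `mMap → 1`
  have hmc : ContinuousAt (fun z : ℂ => (a * z + 1) / (b * z + 1)) 0 := by
    apply ContinuousAt.div (by fun_prop) (by fun_prop)
    simp
  have hm : Tendsto mMap l (nhds 1) := by
    have h0 : Tendsto (fun z : ℂ => (a * z + 1) / (b * z + 1)) l (nhds 1) := by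
      have := hmc.tendsto.mono_left (nhdsWithin_le_nhds (s := Metric.ball (0 : ℂ) 1 \ {0}))
      simpa using this
    refine h0.congr' ?_
    filter_upwards [hne] with z hz
    exact (hm_eq z hz).symm
  -- `mMap ^ (3/2) → 1`
  have hpow : Tendsto (fun z : ℂ => mMap z ^ ((3 : ℂ) / 2)) l (nhds 1) := by
    have hc : ContinuousAt (fun w : ℂ => w ^ ((3 : ℂ) / 2)) 1 :=
      continuousAt_cpow_const (by simp)
    have := hc.tendsto.comp hm
    simpa [Function.comp_def, Complex.one_cpow] using this
  -- `b z + 1 → 1`, nonzero eventually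
  have hbz : Tendsto (fun z : ℂ => b * z + 1) l (nhds 1) := by
    have : ContinuousAt (fun z : ℂ => b * z + 1) 0 := by fun_prop
    have h := this.tendsto.mono_left (nhdsWithin_le_nhds (s := Metric.ball (0 : ℂ) 1 \ {0}))
    simpa using h
  have hbzne : ∀ᶠ z in l, b * z + 1 ≠ 0 := hbz.eventually_ne one_ne_zero
  -- `m² + m + 1 → 3`, nonzero eventually
  have hq : Tendsto (fun z : ℂ => mMap z ^ 2 + mMap z + 1) l (nhds 3) := by
    have h := ((hm.pow 2).add hm).add (tendsto_const_nhds (x := (1 : ℂ)))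
    norm_num at h
    exact h
  have hqne : ∀ᶠ z in l, mMap z ^ 2 + mMap z + 1 ≠ 0 :=
    hq.eventually_ne (by norm_num)
  -- eventual algebraic identity
  have hEq : ∀ᶠ z in l,
      z * gMap z = (b * z + 1) * (1 + 2 * mMap z ^ ((3 : ℂ) / 2) + mMap z ^ (3 : ℕ)) /
        (s3 * (mMap z ^ 2 + mMap z + 1)) := by
    filter_upwards [hne, hbzne, hqne] with z hz hbne hqne'
    set m := mMap z with hmdef
    have hm1 : (b * z + 1) * (m - 1) = s3 * z := by
      rw [hmdef, hm_eq z hz]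
      field_simp
      rw [ha, hb]
      ring
    have hm1ne : m - 1 ≠ 0 := by
      intro h
      rw [h, mul_zero] at hm1
      exact hz (by
        have := hm1.symm
        rcases mul_eq_zero.mp this with h' | h'
        · exact absurd h' hs3ne
        · exact h')
    have hm3ne : m ^ (3 : ℕ) - 1 ≠ 0 := by
      have hfac : m ^ (3 : ℕ) - 1 = (m - 1) * (m ^ 2 + m + 1) := by ring
      rw [hfac]
      exact mul_ne_zero hm1ne hqne'
    rw [gMap, ← hmdef, mul_div_assoc']
    rw [div_eq_div_iff hm3ne (mul_ne_zero hs3ne hqne')]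
    have hfac : m ^ (3 : ℕ) - 1 = (m - 1) * (m ^ 2 + m + 1) := by ring
    rw [hfac]
    linear_combination (-(1 + 2 * m ^ ((3 : ℂ) / 2) + m ^ (3 : ℕ)) * (m ^ 2 + m + 1)) * hm1
  -- the limit of the right-hand side
  have hlim : Tendsto (fun z : ℂ =>
      (b * z + 1) * (1 + 2 * mMap z ^ ((3 : ℂ) / 2) + mMap z ^ (3 : ℕ)) /
        (s3 * (mMap z ^ 2 + mMap z + 1))) l (nhds ((1 * (1 + 2 * 1 + 1)) / (s3 * 3))) := by
    refine Tendsto.div ?_ ?_ ?_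
    · exact hbz.mul ((tendsto_const_nhds.add ((tendsto_const_nhds.mul hpow))).add (by simpa using hm.pow 3))
    · exact tendsto_const_nhds.mul hq
    · exact mul_ne_zero hs3ne (by norm_num)
  have hval : ((4 / (3 * Real.sqrt 3) : ℝ) : ℂ) = (1 * (1 + 2 * 1 + 1)) / (s3 * 3) := by
    push_cast
    rw [hs3]
    ring
  rw [hval]
  exact hlim.congr' (hEq.mono fun z h => h.symm)
end

section
/- As z → 0 with z ≠ 0 (z in the punctured open unit disk), g(z) − (4/(3√3))/z tends to 2i/(3√3), where g is defined via m(z) = ((√3/2 + i/2) + 1/z)/((−√3/2 + i/2) + 1/z) and g(z) = (1 + 2·m(z)^{3/2} + m(z)³)/(m(z)³ − 1), using principal branch complex powers. In other words, the outer conformal center of the upper half of the unit disk equals 2i/(3√3). -/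
open Complex Filter

noncomputable def r3C : ℂ := (Real.sqrt 3 : ℝ)
noncomputable def aCC : ℂ := r3C / 2 + I / 2
noncomputable def bCC : ℂ := -(r3C / 2) + I / 2
noncomputable def mtF (z : ℂ) : ℂ := (1 + aCC * z) / (1 + bCC * z)
noncomputable def SfF (z : ℂ) : ℂ := Complex.exp (Complex.log (mtF z) * ((3 : ℂ) / 2))
noncomputable def FfF (z : ℂ) : ℂ := SfF z - 1
noncomputable def qfF : ℂ → ℂ := dslope FfF 0
noncomputable def GfF : ℂ → ℂ := dslope qfF 0

lemma r3_sq : r3C * r3C = 3 := by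
  rw [r3C, ← Complex.ofReal_mul, Real.mul_self_sqrt (by norm_num)]; norm_num

lemma r3_ne : r3C ≠ 0 := by
  intro h
  have := r3_sq
  rw [h, mul_zero] at this
  exact absurd this (by norm_num)

lemma mt_zero : mtF 0 = 1 := by simp [mtF]

lemma mt_analytic : AnalyticAt ℂ mtF 0 := by
  apply AnalyticAt.div
  · exact analyticAt_const.add (analyticAt_const.mul analyticAt_id)
  · exact analyticAt_const.add (analyticAt_const.mul analyticAt_id)
  · simp

lemma Sf_analytic : AnalyticAt ℂ SfF 0 := by
  apply analyticAt_cexp.comp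
  apply AnalyticAt.mul _ analyticAt_const
  exact (analyticAt_clog (by rw [mt_zero]; exact one_mem_slitPlane)).comp mt_analytic

lemma Ff_analytic : AnalyticAt ℂ FfF 0 := Sf_analytic.sub analyticAt_const

lemma Sf_zero : SfF 0 = 1 := by simp [SfF, mt_zero]

lemma Ff_zero : FfF 0 = 0 := by simp [FfF, Sf_zero]

lemma qf_analytic : AnalyticAt ℂ qfF 0 := by
  obtain ⟨p, hp⟩ := Ff_analytic
  exact ⟨_, hp.has_fpower_series_dslope_fslope⟩

lemma Gf_analytic : AnalyticAt ℂ GfF 0 := by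
  obtain ⟨p, hp⟩ := qf_analytic
  exact ⟨_, hp.has_fpower_series_dslope_fslope⟩

noncomputable def DfF (z : ℂ) : ℂ := 3 / 2 * r3C / ((1 + aCC * z) * (1 + bCC * z)) * SfF z

lemma ev_facts : ∀ᶠ z in nhds (0 : ℂ),
    mtF z ∈ slitPlane ∧ 1 + aCC * z ≠ 0 ∧ 1 + bCC * z ≠ 0 := by
  have h1 : ∀ᶠ z in nhds (0 : ℂ), mtF z ∈ slitPlane := by
    have := mt_analytic.continuousAt
    exact this.eventually_mem (by rw [mt_zero]; exact isOpen_slitPlane.mem_nhds one_mem_slitPlane)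
  have h2 : ∀ᶠ z in nhds (0 : ℂ), 1 + aCC * z ≠ 0 := by
    have : ContinuousAt (fun z : ℂ => 1 + aCC * z) 0 := by fun_prop
    simpa using this.eventually_ne (by simp)
  have h3 : ∀ᶠ z in nhds (0 : ℂ), 1 + bCC * z ≠ 0 := by
    have : ContinuousAt (fun z : ℂ => 1 + bCC * z) 0 := by fun_prop
    simpa using this.eventually_ne (by simp)
  filter_upwards [h1, h2, h3] with z e1 e2 e3; exact ⟨e1, e2, e3⟩

lemma hS_deriv : ∀ᶠ z in nhds (0 : ℂ), HasDerivAt SfF (DfF z) z := by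
  filter_upwards [ev_facts] with z hz
  obtain ⟨hsl, ha, hb⟩ := hz
  have hm0 : mtF z ≠ 0 := slitPlane_ne_zero hsl
  have hu : HasDerivAt (fun w : ℂ => 1 + aCC * w) aCC z := by
    simpa using ((hasDerivAt_id z).const_mul aCC).const_add 1
  have hv : HasDerivAt (fun w : ℂ => 1 + bCC * w) bCC z := by
    simpa using ((hasDerivAt_id z).const_mul bCC).const_add 1
  have hm : HasDerivAt mtF
      ((aCC * (1 + bCC * z) - (1 + aCC * z) * bCC) / (1 + bCC * z) ^ 2) z := hu.div hv hb
  have hlog := hm.clog hsl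
  have hmul := hlog.mul_const ((3 : ℂ) / 2)
  have hexp := hmul.cexp
  convert hexp using 1
  show DfF z = Complex.exp (Complex.log (mtF z) * (3 / 2)) *
    ((aCC * (1 + bCC * z) - (1 + aCC * z) * bCC) / (1 + bCC * z) ^ 2 / mtF z * (3 / 2))
  rw [DfF, SfF, mtF]
  have hab : aCC * (1 + bCC * z) - (1 + aCC * z) * bCC = r3C := by rw [aCC, bCC]; ring
  rw [hab]
  field_simp
  all_goals rfl

lemma hF_deriv : ∀ᶠ z in nhds (0 : ℂ), HasDerivAt FfF (DfF z) z := by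
  filter_upwards [hS_deriv] with z h
  exact h.sub_const 1

lemma Df_zero : DfF 0 = 3 / 2 * r3C := by simp [DfF, Sf_zero]

lemma qf_zero : qfF 0 = 3 / 2 * r3C := by
  rw [qfF, dslope_same, hF_deriv.self_of_nhds.deriv, Df_zero]

lemma deriv_deriv_F : deriv (deriv FfF) 0 = 27 / 4 - 3 / 2 * r3C * I := by
  have hev : deriv FfF =ᶠ[nhds 0] DfF := by
    filter_upwards [hF_deriv] with z h using h.deriv
  rw [hev.deriv_eq]
  have hu0 : HasDerivAt (fun w : ℂ => 1 + aCC * w) aCC 0 := by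
    simpa using ((hasDerivAt_id (0:ℂ)).const_mul aCC).const_add 1
  have hv0 : HasDerivAt (fun w : ℂ => 1 + bCC * w) bCC 0 := by
    simpa using ((hasDerivAt_id (0:ℂ)).const_mul bCC).const_add 1
  have hP := hu0.fun_mul hv0
  have hQ := (hasDerivAt_const (0:ℂ) (3 / 2 * r3C)).fun_div hP (by simp)
  have hD := hQ.fun_mul hS_deriv.self_of_nhds
  have : DfF = fun z => 3 / 2 * r3C / ((1 + aCC * z) * (1 + bCC * z)) * SfF z := rfl
  rw [this]
  rw [hD.deriv]
  rw [Df_zero, Sf_zero]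
  have hab : aCC + bCC = I := by rw [aCC, bCC]; ring
  simp only [mul_zero, add_zero, mul_one, one_mul, zero_mul, zero_sub, div_one, one_pow]
  rw [hab]
  linear_combination (9/4 : ℂ) * r3_sq

lemma Ff_eq_mul : FfF = fun z => z * qfF z := by
  funext z
  rcases eq_or_ne z 0 with rfl | hz
  · simp [Ff_zero]
  · rw [qfF, dslope_of_ne _ hz, slope_def_field, Ff_zero]
    field_simp
    ring

lemma deriv_qf_zero : deriv qfF 0 = 27 / 8 - 3 / 4 * r3C * I := by
  obtain ⟨s, hs, hos⟩ := qf_analytic.eventually_analyticAt.exists_mem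
  have hq'an : AnalyticAt ℂ (deriv qfF) 0 := by
    obtain ⟨t, hts, hto, h0t⟩ := mem_nhds_iff.mp hs
    exact (AnalyticOnNhd.deriv (fun x hx => hos x (hts hx))) 0 h0t
  have hev : deriv FfF =ᶠ[nhds 0] fun z => qfF z + z * deriv qfF z := by
    filter_upwards [hs] with z hz
    have hq : HasDerivAt qfF (deriv qfF z) z := (hos z hz).differentiableAt.hasDerivAt
    have := (hasDerivAt_id' z).fun_mul hq
    rw [Ff_eq_mul]
    simpa using this.deriv
  have h2 : deriv (deriv FfF) 0 = 2 * deriv qfF 0 := by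
    rw [hev.deriv_eq]
    have hq0 : HasDerivAt qfF (deriv qfF 0) 0 := qf_analytic.differentiableAt.hasDerivAt
    have hq1 : HasDerivAt (fun z : ℂ => z * deriv qfF z) (deriv qfF 0) 0 := by
      simpa using (hasDerivAt_id' (0:ℂ)).fun_mul hq'an.differentiableAt.hasDerivAt
    rw [(hq0.fun_add hq1).deriv]
    ring
  have := deriv_deriv_F
  rw [h2] at this
  linear_combination this / 2

lemma Gf_zero : GfF 0 = 27 / 8 - 3 / 4 * r3C * I := by
  rw [GfF, dslope_same, deriv_qf_zero]

lemma ofreal_coe : ((Real.sqrt 3 / 2 : ℝ) : ℂ) = r3C / 2 := by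
  rw [r3C]; push_cast; ring

lemma alg_key (z Q G r3 : ℂ) (hz : z ≠ 0) (hQ : Q ≠ 0) (hr : r3 ≠ 0)
    (hQdef : Q = 3 / 2 * r3 + z * G) :
    (2 + z * Q) / (z * Q) - 4 / (3 * r3) / z = 1 - 4 / (3 * r3) * G / Q := by
  field_simp
  rw [hQdef]
  ring

lemma key_eq (z : ℂ) (hz : z ≠ 0) (hsl : mtF z ∈ slitPlane)
    (ha : 1 + aCC * z ≠ 0) (hb : 1 + bCC * z ≠ 0)
    (hq : qfF z ≠ 0) (hS1 : SfF z + 1 ≠ 0) :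
    gMap z - ((4 / (3 * Real.sqrt 3) : ℝ) : ℂ) / z
      = 1 - (4 / (3 * r3C)) * GfF z / qfF z := by
  have hm0 : mtF z ≠ 0 := slitPlane_ne_zero hsl
  have hc0 : ((4 / (3 * Real.sqrt 3) : ℝ) : ℂ) = 4 / (3 * r3C) := by
    rw [r3C]; push_cast; ring
  -- mMap z = mtF z
  have hmm : mMap z = mtF z := by
    rw [mMap, mtF, ofreal_coe]
    have h1 : r3C / 2 + I / 2 + 1 / z = (1 + aCC * z) / z := by
      rw [aCC]; field_simp; ring
    have h2 : -(r3C / 2) + I / 2 + 1 / z = (1 + bCC * z) / z := by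
      rw [bCC]; field_simp; ring
    rw [h1, h2, div_div_div_comm, div_self hz, div_one]
  -- powers
  have hcpow : mMap z ^ ((3 : ℂ) / 2) = SfF z := by
    rw [hmm, cpow_def_of_ne_zero hm0, SfF]
  have hcube : mMap z ^ (3 : ℕ) = SfF z ^ 2 := by
    rw [hmm, ← Complex.exp_log hm0, SfF, ← Complex.exp_nat_mul, ← Complex.exp_nat_mul]
    congr 1; push_cast; ring
  -- S - 1 = z * q
  have hS' : SfF z = 1 + z * qfF z := by
    have h := congrFun Ff_eq_mul z
    rw [FfF] at h
    linear_combination h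
  have hG : qfF z = 3 / 2 * r3C + z * GfF z := by
    rw [GfF, dslope_of_ne _ hz, slope_def_field, qf_zero]
    field_simp
    ring
  have hzq : z * qfF z ≠ 0 := mul_ne_zero hz hq
  have hSm1 : SfF z - 1 ≠ 0 := by
    rw [hS']; simpa using hzq
  rw [gMap, hcpow, hcube, hc0]
  have hg1 : (1 + 2 * SfF z + SfF z ^ 2) / (SfF z ^ 2 - 1) = (SfF z + 1) / (SfF z - 1) := by
    rw [show 1 + 2 * SfF z + SfF z ^ 2 = (SfF z + 1) * (SfF z + 1) by ring,
      show SfF z ^ 2 - 1 = (SfF z - 1) * (SfF z + 1) by ring]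
    field_simp
  rw [hg1,
    show SfF z + 1 = 2 + z * qfF z by rw [hS']; ring,
    show SfF z - 1 = z * qfF z by rw [hS']; ring]
  exact alg_key z (qfF z) (GfF z) r3C hz hq r3_ne hG

lemma hq0ne : qfF 0 ≠ 0 := by
  rw [qf_zero]; exact mul_ne_zero (by norm_num) r3_ne

lemma hval : (1 : ℂ) - 4 / (3 * r3C) * GfF 0 / qfF 0
    = ((2 / (3 * Real.sqrt 3) : ℝ) : ℂ) * I := by
  rw [Gf_zero, qf_zero,
    show ((2 / (3 * Real.sqrt 3) : ℝ) : ℂ) = 2 / (3 * r3C) by rw [r3C]; push_cast; ring]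
  field_simp [r3_ne]
  linear_combination 72 * r3_sq

/-- `g(z) − (4/(3√3))/z → 2i/(3√3)` as `z → 0` in the punctured open
unit disk: the outer conformal center of the upper half-disk is `2i/(3√3)`. -/
theorem stmt_6 :
    Tendsto (fun z : ℂ => gMap z - ((4 / (3 * Real.sqrt 3) : ℝ) : ℂ) / z)
      (nhdsWithin 0 (Metric.ball (0 : ℂ) 1 \ {0}))
      (nhds (((2 / (3 * Real.sqrt 3) : ℝ) : ℂ) * I)) := by
  have hcont : ContinuousAt (fun z : ℂ => 1 - 4 / (3 * r3C) * GfF z / qfF z) 0 :=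
    continuousAt_const.sub
      ((continuousAt_const.mul Gf_analytic.continuousAt).div qf_analytic.continuousAt hq0ne)
  have htend : Tendsto (fun z : ℂ => 1 - 4 / (3 * r3C) * GfF z / qfF z)
      (nhdsWithin 0 (Metric.ball (0 : ℂ) 1 \ {0}))
      (nhds (((2 / (3 * Real.sqrt 3) : ℝ) : ℂ) * I)) := by
    rw [← hval]
    exact hcont.continuousWithinAt.tendsto
  apply htend.congr'
  have hzne : ∀ᶠ z in nhdsWithin 0 (Metric.ball (0 : ℂ) 1 \ {0}), z ≠ 0 := by
    filter_upwards [self_mem_nhdsWithin] with z hz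
    simpa using hz.2
  have hqe : ∀ᶠ z in nhds (0 : ℂ), qfF z ≠ 0 :=
    qf_analytic.continuousAt.eventually_ne hq0ne
  have hSe : ∀ᶠ z in nhds (0 : ℂ), SfF z + 1 ≠ 0 := by
    have hc : ContinuousAt (fun z : ℂ => SfF z + 1) 0 :=
      Sf_analytic.continuousAt.add continuousAt_const
    have := hc.eventually_ne (by simp [Sf_zero] : SfF 0 + 1 ≠ 0)
    simpa using this
  filter_upwards [hzne, ev_facts.filter_mono nhdsWithin_le_nhds,
    hqe.filter_mono nhdsWithin_le_nhds, hSe.filter_mono nhdsWithin_le_nhds]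
    with z h1 h2 h3 h4
  exact (key_eq z h1 h2.1 h2.2.1 h2.2.2 h3 h4).symm
end

section
/- For every r with 0 < r < 1, the circle average (1/(2π)) ∫₀^{2π} g(r·e^{it}) dt equals 2i/(3√3), where g is defined via m(z) = ((√3/2 + i/2) + 1/z)/((−√3/2 + i/2) + 1/z) and g(z) = (1 + 2·m(z)^{3/2} + m(z)³)/(m(z)³ − 1), using principal branch complex powers. -/
open Complex
open Metric

noncomputable def s3 : ℂ := (Real.sqrt 3 : ℝ)
noncomputable def aa : ℂ := (s3 + I) / 2
noncomputable def bb : ℂ := (-s3 + I) / 2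
noncomputable def MM (z : ℂ) : ℂ := (1 + aa * z) / (1 + bb * z)
noncomputable def uu (z : ℂ) : ℂ := MM z ^ ((1 : ℂ) / 2)
noncomputable def SS (z : ℂ) : ℂ := MM z ^ ((3 : ℂ) / 2)
noncomputable def TT (z : ℂ) : ℂ :=
  s3 * (MM z + uu z + 1) / ((1 + bb * z) * (uu z + 1))
noncomputable def qq (z : ℂ) : ℂ :=
  s3 * (2 * s3 / (1 + bb * z) - s3 / ((1 + bb * z) * (uu z + 1)) - 3 * bb * (uu z + 1)) /
    (2 * (1 + bb * z) * (uu z + 1))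
noncomputable def cc : ℂ := 4 / (3 * s3)
noncomputable def FF (z : ℂ) : ℂ := 1 - cc * qq z / TT z

lemma hs3sq : s3 ^ 2 = 3 := by
  rw [s3]
  norm_cast
  rw [Real.sq_sqrt]; norm_num

lemma hs3ne : s3 ≠ 0 := by
  intro h
  have := hs3sq
  rw [h] at this
  norm_num at this

lemma abs_bb : ‖bb‖ = 1 := by
  have h : bb = ((-(Real.sqrt 3) / 2 : ℝ) : ℂ) + ((1 / 2 : ℝ) : ℂ) * I := by
    rw [bb, s3]; push_cast; ring
  have h2 : Complex.normSq bb = 1 := by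
    rw [h, Complex.normSq_add_mul_I]
    have := Real.sq_sqrt (by norm_num : (3:ℝ) ≥ 0).le
    nlinarith [Real.sq_sqrt (by norm_num : (0:ℝ) ≤ 3)]
  rw [Complex.norm_def, h2, Real.sqrt_one]

lemma denom_ne {z : ℂ} (hz : ‖z‖ < 1) : 1 + bb * z ≠ 0 := by
  intro h
  have hb : bb * z = -1 := by linear_combination h
  have : ‖bb * z‖ = 1 := by rw [hb]; simp
  rw [norm_mul, abs_bb, one_mul] at this
  rw [this] at hz
  exact lt_irrefl _ hz


lemma MM_slit {z : ℂ} (hz : ‖z‖ < 1) : MM z ∈ Complex.slitPlane := by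
  rw [Complex.mem_slitPlane_iff]
  by_contra hcon
  push_neg at hcon
  obtain ⟨hre, him⟩ := hcon
  set x : ℝ := (MM z).re with hx
  have hMx : MM z = (x : ℝ) := by
    apply Complex.ext
    · simp [hx]
    · simpa using him
  have h1 : 1 + bb * z ≠ 0 := denom_ne hz
  have heq : 1 + aa * z = (x : ℂ) * (1 + bb * z) := by
    have := (div_eq_iff h1).mp (hMx ▸ rfl : MM z = (x:ℂ))
    rw [MM, div_eq_iff h1] at hMx
    exact hMx
  have heq2 : z * (aa - (x : ℂ) * bb) = (x : ℂ) - 1 := by linear_combination heq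
  have hns : Complex.normSq z * Complex.normSq (aa - (x:ℂ) * bb) = Complex.normSq ((x:ℂ) - 1) := by
    rw [← map_mul]; rw [heq2]
  have habm : aa - (x:ℂ) * bb = ((Real.sqrt 3 * (1 + x) / 2 : ℝ) : ℂ) + (((1 - x) / 2 : ℝ)) * I := by
    rw [aa, bb, s3]; push_cast; ring
  have h3 : (Real.sqrt 3)^2 = 3 := Real.sq_sqrt (by norm_num)
  have hval : Complex.normSq (aa - (x:ℂ) * bb) = x^2 + x + 1 := by
    rw [habm, Complex.normSq_add_mul_I]; nlinarith [h3]
  have hval2 : Complex.normSq ((x:ℂ) - 1) = (x - 1)^2 := by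
    have : ((x:ℂ) - 1) = ((x - 1 : ℝ) : ℂ) := by push_cast; ring
    rw [this, Complex.normSq_ofReal]; ring
  have hzlt : Complex.normSq z < 1 := by
    have := Complex.sq_norm z
    nlinarith [norm_nonneg z]
  have hpos : (0:ℝ) < x^2 + x + 1 := by nlinarith
  rw [hval, hval2] at hns
  nlinarith [Complex.normSq_nonneg z]

lemma MM_ne {z : ℂ} (hz : ‖z‖ < 1) : MM z ≠ 0 :=
  Complex.slitPlane_ne_zero (MM_slit hz)

lemma uu_sq {z : ℂ} (hz : ‖z‖ < 1) : uu z * uu z = MM z := by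
  rw [uu, ← Complex.cpow_add _ _ (MM_ne hz)]
  norm_num

lemma SS_eq {z : ℂ} (hz : ‖z‖ < 1) : SS z = MM z * uu z := by
  rw [SS, uu]
  rw [show ((3:ℂ)/2) = 1 + 1/2 by norm_num, Complex.cpow_add _ _ (MM_ne hz), Complex.cpow_one]

lemma SS_sq {z : ℂ} (hz : ‖z‖ < 1) : SS z ^ 2 = MM z ^ (3 : ℕ) := by
  rw [sq, SS, ← Complex.cpow_add _ _ (MM_ne hz)]
  rw [show ((3:ℂ)/2 + 3/2) = ((3:ℕ):ℂ) by norm_num, Complex.cpow_natCast]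

lemma uu_ne {z : ℂ} (hz : ‖z‖ < 1) : uu z + 1 ≠ 0 := by
  intro h
  have hu : uu z = -1 := by linear_combination h
  have : MM z = 1 := by rw [← uu_sq hz, hu]; ring
  rw [uu, this, Complex.one_cpow] at hu
  norm_num at hu

lemma MM_sub_one {z : ℂ} (hz : ‖z‖ < 1) :
    (MM z - 1) * (1 + bb * z) = s3 * z := by
  rw [MM, div_sub_one (denom_ne hz), div_mul_cancel₀ _ (denom_ne hz), aa, bb]; ring

lemma cube_diff (z : ℂ) : (1 + aa * z)^3 - (1 + bb * z)^3 = 3 * s3 * z * (1 + I * z) := by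
  have hI : I^2 = -1 := Complex.I_sq
  rw [aa, bb]
  linear_combination (s3 * z^3 / 4) * hs3sq + (3 * s3 * z^3 / 4) * hI

lemma MM_cube_ne {z : ℂ} (hz : ‖z‖ < 1) (hz0 : z ≠ 0) : MM z ^ (3:ℕ) ≠ 1 := by
  intro h
  have h1 : 1 + bb * z ≠ 0 := denom_ne hz
  have hcube : (1 + aa * z)^3 = (1 + bb * z)^3 := by
    rw [MM, div_pow, div_eq_one_iff_eq (pow_ne_zero 3 h1)] at h
    exact h
  have h2 : 3 * s3 * z * (1 + I * z) = 0 := by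
    rw [← cube_diff, hcube]; ring
  have h3 : 1 + I * z = 0 := by
    rcases mul_eq_zero.mp h2 with h | h
    · rcases mul_eq_zero.mp h with h | h
      · exact absurd h (by simpa using hs3ne)
      · exact absurd h hz0
    · exact h
  have hzI : z = I := by
    have hI : I^2 = -1 := Complex.I_sq
    linear_combination (-I) * h3 + z * hI
  rw [hzI] at hz
  simp at hz

lemma SS_ne_one {z : ℂ} (hz : ‖z‖ < 1) (hz0 : z ≠ 0) : SS z ≠ 1 := by
  intro h
  apply MM_cube_ne hz hz0
  rw [← SS_sq hz, h]; norm_num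

lemma SS_ne_neg_one {z : ℂ} (hz : ‖z‖ < 1) (hz0 : z ≠ 0) : SS z ≠ -1 := by
  intro h
  apply MM_cube_ne hz hz0
  rw [← SS_sq hz, h]; norm_num

lemma zTT {z : ℂ} (hz : ‖z‖ < 1) : z * TT z = SS z - 1 := by
  have h1 : 1 + bb * z ≠ 0 := denom_ne hz
  have h3 : uu z + 1 ≠ 0 := uu_ne hz
  have hu2 := uu_sq hz
  have hS := SS_eq hz
  have h6 := MM_sub_one hz
  rw [TT, hS, mul_div_assoc', div_eq_iff (mul_ne_zero h1 h3)]
  linear_combination (-(MM z)*(1+bb*z)) * hu2 + (-(1 + MM z + uu z)) * h6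

lemma zqq {z : ℂ} (hz : ‖z‖ < 1) : z * qq z = TT z - 3 * s3 / 2 := by
  have h1 : 1 + bb * z ≠ 0 := denom_ne hz
  have h3 : uu z + 1 ≠ 0 := uu_ne hz
  have hu2 := uu_sq hz
  have h6 := MM_sub_one hz
  rw [qq, TT]
  have h1' : 1 + z * bb ≠ 0 := by rw [mul_comm]; exact h1
  field_simp
  linear_combination (-s3*(2*(uu z+1)-1)) * h6 + (s3*(1+bb*z)) * hu2

lemma MM_zero : MM 0 = 1 := by simp [MM]
lemma uu_zero : uu 0 = 1 := by rw [uu, MM_zero, Complex.one_cpow]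
lemma TT_zero : TT 0 = 3 * s3 / 2 := by
  rw [TT, MM_zero, uu_zero]; norm_num; ring
lemma TT_zero_ne : TT 0 ≠ 0 := by
  rw [TT_zero]
  intro h
  apply hs3ne
  field_simp at h
  linear_combination h / 3

lemma TT_ne {z : ℂ} (hz : ‖z‖ < 1) : TT z ≠ 0 := by
  rcases eq_or_ne z 0 with rfl | hz0
  · exact TT_zero_ne
  · intro h
    apply SS_ne_one hz hz0
    have := zTT hz
    rw [h, mul_zero] at this
    linear_combination -this

lemma qq_zero : qq 0 = s3 * (2 * s3 - s3 / 2 - 6 * bb) / 4 := by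
  rw [qq, uu_zero]
  norm_num
  left; ring

lemma FF_zero : FF 0 = ((2 / (3 * Real.sqrt 3) : ℝ) : ℂ) * I := by
  rw [FF, qq_zero, TT_zero, cc]
  have h1 : s3 ≠ 0 := hs3ne
  have h2 : s3 ^ 2 = 3 := hs3sq
  have hb : bb = (-s3 + I) / 2 := rfl
  have hcast : ((2 / (3 * Real.sqrt 3) : ℝ) : ℂ) = 2 / (3 * s3) := by
    rw [s3]; push_cast; ring
  rw [hcast, hb]
  field_simp
  ring_nf

lemma ball_abs {z : ℂ} (hz : z ∈ ball (0:ℂ) 1) : ‖z‖ < 1 := by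
  simpa using mem_ball_zero_iff.mp hz

lemma MM_diff : DifferentiableOn ℂ MM (ball (0:ℂ) 1) := by
  apply DifferentiableOn.div
  · exact (differentiable_const _).differentiableOn.add
      ((differentiable_id.const_mul _).differentiableOn)
  · exact (differentiable_const _).differentiableOn.add
      ((differentiable_id.const_mul _).differentiableOn)
  · exact fun z hz => denom_ne (ball_abs hz)

lemma uu_diff : DifferentiableOn ℂ uu (ball (0:ℂ) 1) :=
  MM_diff.cpow (differentiableOn_const _) fun z hz => MM_slit (ball_abs hz)

lemma TT_diff : DifferentiableOn ℂ TT (ball (0:ℂ) 1) := by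
  apply DifferentiableOn.div
  · exact (differentiableOn_const _).mul
      ((MM_diff.add uu_diff).add (differentiableOn_const _))
  · exact ((differentiableOn_const _).add
      ((differentiable_id.const_mul _).differentiableOn)).mul
      (uu_diff.add (differentiableOn_const _))
  · exact fun z hz => mul_ne_zero (denom_ne (ball_abs hz)) (uu_ne (ball_abs hz))

lemma qq_diff : DifferentiableOn ℂ qq (ball (0:ℂ) 1) := by
  have hB : DifferentiableOn ℂ (fun z : ℂ => 1 + bb * z) (ball (0:ℂ) 1) :=
    (differentiableOn_const _).add ((differentiable_id.const_mul _).differentiableOn)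
  have hU : DifferentiableOn ℂ (fun z : ℂ => uu z + 1) (ball (0:ℂ) 1) :=
    uu_diff.add (differentiableOn_const _)
  have hBne : ∀ z ∈ ball (0:ℂ) 1, 1 + bb * z ≠ 0 := fun z hz => denom_ne (ball_abs hz)
  have hUne : ∀ z ∈ ball (0:ℂ) 1, uu z + 1 ≠ 0 := fun z hz => uu_ne (ball_abs hz)
  apply DifferentiableOn.div
  · apply DifferentiableOn.mul (differentiableOn_const _)
    apply DifferentiableOn.sub
    apply DifferentiableOn.sub
    · exact (differentiableOn_const _).div hB hBne
    · exact (differentiableOn_const _).div (hB.mul hU)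
        fun z hz => mul_ne_zero (hBne z hz) (hUne z hz)
    · exact (differentiableOn_const _).mul hU
  · exact ((differentiableOn_const _).mul hB).mul hU
  · exact fun z hz => mul_ne_zero
      (mul_ne_zero two_ne_zero (hBne z hz)) (hUne z hz)

lemma FF_diff : DifferentiableOn ℂ FF (ball (0:ℂ) 1) := by
  apply DifferentiableOn.sub (differentiableOn_const _)
  apply DifferentiableOn.div ((differentiableOn_const _).mul qq_diff) TT_diff
  exact fun z hz => TT_ne (ball_abs hz)

lemma mMap_eq {z : ℂ} (hz : ‖z‖ < 1) (hz0 : z ≠ 0) : mMap z = MM z := by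
  have h1 : 1 + bb * z ≠ 0 := denom_ne hz
  have hBB : -((Real.sqrt 3 / 2 : ℝ) : ℂ) + I / 2 + 1 / z = (1 + bb * z) / z := by
    rw [bb, s3]; push_cast; field_simp; ring
  have hAA : ((Real.sqrt 3 / 2 : ℝ) : ℂ) + I / 2 + 1 / z = (1 + aa * z) / z := by
    rw [aa, s3]; push_cast; field_simp; ring
  have hQ : (1 + bb * z) / z ≠ 0 := div_ne_zero h1 hz0
  rw [mMap, MM, hAA, hBB, div_div_div_cancel_right₀]
  exact hz0

lemma gMap_eq {z : ℂ} (hz : ‖z‖ < 1) (hz0 : z ≠ 0) :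
    gMap z = FF z + cc / z := by
  have h0 := SS_ne_one hz hz0
  have h0' := SS_ne_neg_one hz hz0
  have hd1 : SS z - 1 ≠ 0 := sub_ne_zero.mpr h0
  have hd2 : SS z + 1 ≠ 0 := fun h => h0' (by linear_combination h)
  have hT := zTT hz
  have hq := zqq hz
  have hTne := TT_ne hz
  have hs := hs3ne
  have hSdef : mMap z ^ ((3:ℂ)/2) = SS z := by rw [mMap_eq hz hz0]; rfl
  have hScube : mMap z ^ (3:ℕ) = SS z ^ 2 := by rw [mMap_eq hz hz0, SS_sq hz]
  have hdd : SS z ^ 2 - 1 ≠ 0 := by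
    intro h
    have h2 : (SS z - 1) * (SS z + 1) = 0 := by linear_combination h
    rcases mul_eq_zero.mp h2 with h3 | h3
    · exact hd1 h3
    · exact hd2 h3
  rw [gMap, hSdef, hScube, FF, cc]
  field_simp
  linear_combination (6*s3*(SS z+1)) * hT + (4*(SS z^2-1)) * hq

/-- for `0 < r < 1`, the circle average
`(1/(2π)) ∫₀^{2π} g(r e^{it}) dt` equals `2i/(3√3)`. -/
theorem stmt_7 (r : ℝ) (hr : r ∈ Set.Ioo (0 : ℝ) 1) :
    ((1 / (2 * Real.pi) : ℝ) : ℂ) *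
        ∫ t in (0 : ℝ)..(2 * Real.pi), gMap ((r : ℂ) * Complex.exp (t * I)) =
      ((2 / (3 * Real.sqrt 3) : ℝ) : ℂ) * I := by
  obtain ⟨hr0, hr1⟩ := hr
  have hrC : (r : ℂ) ≠ 0 := by exact_mod_cast hr0.ne'
  have habs : ∀ t : ℝ, ‖(r : ℂ) * Complex.exp (t * I)‖ = r := by
    intro t
    rw [norm_mul, Complex.norm_exp]
    simp [abs_of_pos hr0]
  have hne : ∀ t : ℝ, (r : ℂ) * Complex.exp (t * I) ≠ 0 := fun t =>
    mul_ne_zero hrC (Complex.exp_ne_zero _)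
  have hmem : ∀ t : ℝ, (r : ℂ) * Complex.exp (t * I) ∈ ball (0 : ℂ) 1 := by
    intro t
    rw [mem_ball_zero_iff, habs t]
    exact hr1
  -- Cauchy: ∫ FF(r e^{it}) dt = 2π FF 0
  have hdiffcl : DiffContOnCl ℂ FF (ball (0:ℂ) r) := by
    apply DifferentiableOn.diffContOnCl
    apply FF_diff.mono
    rw [closure_ball (0:ℂ) hr0.ne']
    exact closedBall_subset_ball hr1
  have hcau := hdiffcl.circleIntegral_sub_inv_smul (mem_ball_self hr0)
  rw [circleIntegral] at hcau
  simp only [deriv_circleMap, circleMap_zero, sub_zero, smul_eq_mul] at hcau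
  have hcongr1 : ∀ t ∈ Set.uIcc (0:ℝ) (2*Real.pi),
      (r : ℂ) * Complex.exp (t * I) * I * (((r : ℂ) * Complex.exp (t * I))⁻¹ *
        FF ((r : ℂ) * Complex.exp (t * I))) = I * FF ((r : ℂ) * Complex.exp (t * I)) := by
    intro t _
    field_simp
  rw [intervalIntegral.integral_congr hcongr1, intervalIntegral.integral_const_mul] at hcau
  have hFint : (∫ t in (0:ℝ)..(2*Real.pi), FF ((r : ℂ) * Complex.exp (t * I)))
      = (2 * Real.pi) * FF 0 := by
    have hI : (I : ℂ) ≠ 0 := Complex.I_ne_zero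
    apply mul_left_cancel₀ hI
    rw [hcau]; push_cast; ring
  -- the singular part integrates to zero
  have hcc : (∫ t in (0:ℝ)..(2*Real.pi), cc / ((r : ℂ) * Complex.exp (t * I))) = 0 := by
    have hcongr2 : ∀ t ∈ Set.uIcc (0:ℝ) (2*Real.pi),
        cc / ((r : ℂ) * Complex.exp (t * I)) = (cc / r) * Complex.exp ((-I) * t) := by
      intro t _
      rw [show ((-I) * (t:ℂ)) = -(t * I) by ring, Complex.exp_neg]
      field_simp
    rw [intervalIntegral.integral_congr hcongr2, intervalIntegral.integral_const_mul,
      integral_exp_mul_complex (by simp [Complex.I_ne_zero] : (-I : ℂ) ≠ 0)]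
    have h1 : Complex.exp ((-I) * ((2 * Real.pi : ℝ) : ℂ)) = 1 := by
      rw [show ((-I) * ((2 * Real.pi : ℝ) : ℂ)) = -(2 * (Real.pi:ℂ) * I) by push_cast; ring,
        Complex.exp_neg, Complex.exp_two_pi_mul_I, inv_one]
    rw [h1]
    simp
  -- split the integral
  have hsplit : (∫ t in (0:ℝ)..(2*Real.pi), gMap ((r : ℂ) * Complex.exp (t * I)))
      = (∫ t in (0:ℝ)..(2*Real.pi), FF ((r : ℂ) * Complex.exp (t * I)))
        + ∫ t in (0:ℝ)..(2*Real.pi), cc / ((r : ℂ) * Complex.exp (t * I)) := by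
    rw [← intervalIntegral.integral_add]
    · apply intervalIntegral.integral_congr
      intro t _
      exact gMap_eq (by rw [habs t]; exact hr1) (hne t)
    · apply Continuous.intervalIntegrable
      apply FF_diff.continuousOn.comp_continuous
      · continuity
      · exact hmem
    · apply Continuous.intervalIntegrable
      apply Continuous.div continuous_const
      · continuity
      · exact hne
  rw [hsplit, hFint, hcc, add_zero, FF_zero]
  have hpi : (Real.pi : ℂ) ≠ 0 := by exact_mod_cast Real.pi_ne_zero
  push_cast
  field_simp
end

section
/- Let 0 < θ < π, let μ₁ = (π−θ)/π and μ₂ = μ₃ = (π+θ)/(2π), and set a₁ = −1, a₂ = ((π−θ) + 2i√(πθ))/(π+θ), a₃ = ((π−θ) − 2i√(πθ))/(π+θ). Then |a₂| = |a₃| = 1 and μ₁/a₁ + μ₂/a₂ + μ₃/a₃ = 0. -/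
open Complex

/-- for `0 < θ < π`, with Schwarz–Christoffel exponents
`μ₁ = (π−θ)/π`, `μ₂ = μ₃ = (π+θ)/(2π)` and prevertices `a₁ = −1`,
`a₂ = ((π−θ) + 2i√(πθ))/(π+θ)`, `a₃ = ((π−θ) − 2i√(πθ))/(π+θ)`, one has
`|a₂| = |a₃| = 1` and `μ₁/a₁ + μ₂/a₂ + μ₃/a₃ = 0`. -/
theorem stmt_8 (θ : ℝ) (hθ : θ ∈ Set.Ioo 0 Real.pi) :
    let μ₁ : ℂ := (((Real.pi - θ) / Real.pi : ℝ) : ℂ)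
    let μ₂ : ℂ := (((Real.pi + θ) / (2 * Real.pi) : ℝ) : ℂ)
    let μ₃ : ℂ := (((Real.pi + θ) / (2 * Real.pi) : ℝ) : ℂ)
    let a₁ : ℂ := -1
    let a₂ : ℂ := (((Real.pi - θ : ℝ) : ℂ) + 2 * I * ((Real.sqrt (Real.pi * θ) : ℝ) : ℂ)) /
      ((Real.pi + θ : ℝ) : ℂ)
    let a₃ : ℂ := (((Real.pi - θ : ℝ) : ℂ) - 2 * I * ((Real.sqrt (Real.pi * θ) : ℝ) : ℂ)) /
      ((Real.pi + θ : ℝ) : ℂ)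
    ‖a₂‖ = 1 ∧ ‖a₃‖ = 1 ∧ μ₁ / a₁ + μ₂ / a₂ + μ₃ / a₃ = 0 := by
  obtain ⟨h0, hπ⟩ := hθ
  have hpi := Real.pi_pos
  intro μ₁ μ₂ μ₃ a₁ a₂ a₃
  set s := Real.sqrt (Real.pi * θ) with hs_def
  have hs : s ^ 2 = Real.pi * θ := Real.sq_sqrt (by positivity)
  have hden : (Real.pi + θ) ≠ 0 := by positivity
  have hdenC : ((Real.pi + θ : ℝ) : ℂ) ≠ 0 := by exact_mod_cast hden
  have hpiC : ((Real.pi : ℝ) : ℂ) ≠ 0 := by exact_mod_cast hpi.ne'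
  have hsC : ((s : ℂ)) ^ 2 = (Real.pi : ℂ) * (θ : ℂ) := by exact_mod_cast hs
  have key : (Real.pi - θ) ^ 2 + (2 * s) ^ 2 = (Real.pi + θ) ^ 2 := by nlinarith [hs]
  have h2 : ‖a₂‖ = 1 := by
    have hsq : ‖a₂‖ ^ 2 = 1 := by
      rw [Complex.sq_norm]
      show Complex.normSq _ = 1
      rw [Complex.normSq_div]
      simp [Complex.normSq_apply, Complex.normSq_apply]
      field_simp
      nlinarith [Real.sq_sqrt Real.pi_pos.le, Real.sq_sqrt h0.le, Real.sqrt_nonneg Real.pi, Real.sqrt_nonneg θ]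
    nlinarith [norm_nonneg a₂]
  have h3 : ‖a₃‖ = 1 := by
    have hsq : ‖a₃‖ ^ 2 = 1 := by
      rw [Complex.sq_norm]
      show Complex.normSq _ = 1
      rw [Complex.normSq_div]
      simp [Complex.normSq_apply, Complex.normSq_apply]
      field_simp
      nlinarith [Real.sq_sqrt Real.pi_pos.le, Real.sq_sqrt h0.le, Real.sqrt_nonneg Real.pi, Real.sqrt_nonneg θ]
    nlinarith [norm_nonneg a₃]
  refine ⟨h2, h3, ?_⟩
  have ha2 : a₂ ≠ 0 := by
    intro h; rw [h] at h2; simp at h2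
  have ha3 : a₃ ≠ 0 := by
    intro h; rw [h] at h3; simp at h3
  have hnum2 : (((Real.pi - θ : ℝ) : ℂ) + 2 * I * (s : ℂ)) ≠ 0 := by
    intro h; apply ha2; show _ / _ = 0; rw [h]; simp
  have hnum3 : (((Real.pi - θ : ℝ) : ℂ) - 2 * I * (s : ℂ)) ≠ 0 := by
    intro h; apply ha3; show _ / _ = 0; rw [h]; simp
  show μ₁ / a₁ + μ₂ / a₂ + μ₃ / a₃ = 0
  have hmul : a₂ * a₃ = 1 := by
    show (_ / _) * (_ / _) = 1
    rw [div_mul_div_comm, div_eq_one_iff_eq (mul_ne_zero hdenC hdenC)]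
    push_cast
    linear_combination (-4 * (Real.pi : ℂ) * (θ : ℂ)) * Complex.I_sq +
      (-4 * Complex.I ^ 2) * hsC
  have hsum : a₂ + a₃ = 2 * ((Real.pi - θ : ℝ) : ℂ) / ((Real.pi + θ : ℝ) : ℂ) := by
    show _ / _ + _ / _ = _
    rw [← add_div]
    ring
  have step : μ₁ / a₁ + μ₂ / a₂ + μ₃ / a₃ = μ₁ / a₁ + μ₂ * (a₂ + a₃) / (a₂ * a₃) := by
    field_simp
    ring
  rw [step, hmul, hsum]
  show (((Real.pi - θ) / Real.pi : ℝ) : ℂ) / (-1) +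
    (((Real.pi + θ) / (2 * Real.pi) : ℝ) : ℂ) *
      (2 * ((Real.pi - θ : ℝ) : ℂ) / ((Real.pi + θ : ℝ) : ℂ)) / 1 = 0
  have hdenC' : ((Real.pi : ℂ) + (θ : ℂ)) ≠ 0 := by push_cast at hdenC; exact hdenC
  push_cast
  field_simp [hpiC, hdenC']
  ring
end
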